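/- Let m be an odd positive integer and h = u² + u^{2m}, u > 0. With J_{i,j} = ∫_{L⁺} x^i y^j dx as above, for all i ≥ 2 and j ≥ 0: (i + j + 1) J_{i,j} = (i-1) h J_{i-2,j} + ((-1)^{i+mj+2m-1} - 1) u^{i+mj+2m-1}. -/

import Mathlib

/-- The angle of the right intersection point `(u, u^m)` of the circle
`x^2 + y^2 = u^2 + u^(2m)` with the switching curve `y = x^m`. -/
noncomputable def thetaB (m : ℕ) (u : ℝ) : ℝ :=
  Real.arcsin (u ^ m / Real.sqrt (u ^ 2 + u ^ (2 * m)))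

/-- `J_{i,j} = ∫_{L⁺} x^i y^j dx` along the arc of the circle `x^2 + y^2 = u^2 + u^(2m)`
lying in `y ≥ x^m` (for odd `m`), oriented from `(-u, -u^m)` (angle `π + θ_B`)
to `(u, u^m)` (angle `θ_B`), i.e. clockwise through the top.  With
`x = √h cos θ`, `y = √h sin θ`, `dx = -√h sin θ dθ`, traversal from `π + θ_B`
down to `θ_B` gives the integral below. -/
noncomputable def Jodd (m : ℕ) (u : ℝ) (i j : ℕ) : ℝ :=
  ∫ t in thetaB m u..(Real.pi + thetaB m u),
    Real.sqrt (u ^ 2 + u ^ (2 * m)) ^ (i + j + 1) * Real.cos t ^ i * Real.sin t ^ (j + 1)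

/-- `I_{i,j} = ∫_{L⁻} x^i y^j dx` along the complementary lower arc, oriented from
`(u, u^m)` (angle `θ_B`) down through the bottom to `(-u, -u^m)` (angle `θ_B - π`). -/
noncomputable def Iodd (m : ℕ) (u : ℝ) (i j : ℕ) : ℝ :=
  ∫ t in (thetaB m u - Real.pi)..thetaB m u,
    Real.sqrt (u ^ 2 + u ^ (2 * m)) ^ (i + j + 1) * Real.cos t ^ i * Real.sin t ^ (j + 1)

/-- the recurrence
`(i+j+1) J_{i,j} = (i-1) h J_{i-2,j} + ((-1)^(i+mj+2m-1) - 1) u^(i+mj+2m-1)` for `i ≥ 2`. -/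
theorem J_recurrence_i (m : ℕ) (hm : Odd m) (u : ℝ) (hu : 0 < u) (i j : ℕ) (hi : 2 ≤ i) :
    ((i : ℝ) + j + 1) * Jodd m u i j =
      ((i : ℝ) - 1) * (u ^ 2 + u ^ (2 * m)) * Jodd m u (i - 2) j +
        ((-1 : ℝ) ^ (i + m * j + 2 * m - 1) - 1) * u ^ (i + m * j + 2 * m - 1) := by
  obtain ⟨k, rfl⟩ : ∃ k, i = k + 2 := ⟨i - 2, by omega⟩
  obtain ⟨l, rfl⟩ : ∃ l, m = 2 * l + 1 := hm
  set h : ℝ := u ^ 2 + u ^ (2 * (2 * l + 1)) with hh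
  have hhpos : 0 < h := by positivity
  set s : ℝ := Real.sqrt h with hsdef
  have hspos : 0 < s := Real.sqrt_pos.mpr hhpos
  have hs2 : s ^ 2 = h := Real.sq_sqrt hhpos.le
  set θ : ℝ := thetaB (2 * l + 1) u with hθ
  have hh2 : h = u ^ 2 + (u ^ (2 * l + 1)) ^ 2 := by rw [hh, pow_mul']
  have hums : u ^ (2 * l + 1) ≤ s := by
    rw [hsdef, hh2, Real.le_sqrt (by positivity)]
    all_goals first
      | exact le_add_of_nonneg_left (by positivity)
      | positivity
  have hsin : Real.sin θ = u ^ (2 * l + 1) / s := by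
    rw [hθ, thetaB, ← hh, ← hsdef]
    apply Real.sin_arcsin
    · have : (0:ℝ) ≤ u ^ (2 * l + 1) / s := by positivity
      linarith
    · rw [div_le_one hspos]; exact hums
  have hcos : Real.cos θ = u / s := by
    rw [hθ, thetaB, ← hh, ← hsdef, Real.cos_arcsin]
    have h1 : 1 - (u ^ (2 * l + 1) / s) ^ 2 = (u / s) ^ 2 := by
      rw [div_pow, div_pow, hs2, hh2]
      field_simp
      try ring
    rw [h1, Real.sqrt_sq (by positivity)]
  -- continuity facts
  have c1 : Continuous fun t => Real.cos t ^ (k + 2) * Real.sin t ^ (j + 1) := by fun_prop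
  have c2 : Continuous fun t => Real.cos t ^ k * Real.sin t ^ (j + 1) := by fun_prop
  -- FTC
  have key : (∫ t in θ..(Real.pi + θ),
        (((k:ℝ) + j + 3) * (Real.cos t ^ (k + 2) * Real.sin t ^ (j + 1)) -
          ((k:ℝ) + 1) * (Real.cos t ^ k * Real.sin t ^ (j + 1)))) =
      Real.cos (Real.pi + θ) ^ (k + 1) * Real.sin (Real.pi + θ) ^ (j + 2) -
        Real.cos θ ^ (k + 1) * Real.sin θ ^ (j + 2) := by
    refine intervalIntegral.integral_eq_sub_of_hasDerivAt
      (f := fun t => Real.cos t ^ (k + 1) * Real.sin t ^ (j + 2)) ?_ ?_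
    · intro t _
      have h1 : HasDerivAt (fun t => Real.cos t ^ (k + 1))
          (((k:ℝ) + 1) * Real.cos t ^ k * (-Real.sin t)) t := by
        have := (Real.hasDerivAt_cos t).fun_pow (k + 1)
        simpa using this
      have h2 : HasDerivAt (fun t => Real.sin t ^ (j + 2))
          (((j:ℝ) + 2) * Real.sin t ^ (j + 1) * Real.cos t) t := by
        have := (Real.hasDerivAt_sin t).fun_pow (j + 2)
        simpa [Nat.add_sub_cancel] using this
      have h3 := h1.mul h2
      refine h3.congr_deriv ?_
      have hsq : Real.sin t ^ 2 = 1 - Real.cos t ^ 2 := Real.sin_sq t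
      linear_combination (-((k:ℝ) + 1)) * Real.cos t ^ k * Real.sin t ^ (j + 1) * hsq
    · apply Continuous.intervalIntegrable
      fun_prop
  set A : ℝ := ∫ t in θ..(Real.pi + θ), Real.cos t ^ (k + 2) * Real.sin t ^ (j + 1) with hA
  set B : ℝ := ∫ t in θ..(Real.pi + θ), Real.cos t ^ k * Real.sin t ^ (j + 1) with hB
  have key2 : ((k:ℝ) + j + 3) * A - ((k:ℝ) + 1) * B =
      Real.cos (Real.pi + θ) ^ (k + 1) * Real.sin (Real.pi + θ) ^ (j + 2) -
        Real.cos θ ^ (k + 1) * Real.sin θ ^ (j + 2) := by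
    rw [← key, intervalIntegral.integral_sub
        ((continuous_const.fun_mul c1).intervalIntegrable _ _) ((continuous_const.fun_mul c2).intervalIntegrable _ _),
      intervalIntegral.integral_const_mul, intervalIntegral.integral_const_mul]
  have hcospi : Real.cos (Real.pi + θ) = -(u / s) := by
    rw [Real.cos_add]; simp [hcos]
  have hsinpi : Real.sin (Real.pi + θ) = -(u ^ (2 * l + 1) / s) := by
    rw [Real.sin_add]; simp [hsin]
  rw [hcospi, hsinpi, hcos, hsin, neg_pow, neg_pow] at key2
  -- rewrite the J's
  have hJ1 : Jodd (2 * l + 1) u (k + 2) j = s ^ (k + 2 + j + 1) * A := by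
    rw [Jodd, ← hh, ← hsdef, ← hθ, hA, ← intervalIntegral.integral_const_mul]
    congr 1; ext t; ring
  have hJ2 : Jodd (2 * l + 1) u (k + 2 - 2) j = s ^ (k + j + 1) * B := by
    rw [show k + 2 - 2 = k from rfl, Jodd, ← hh, ← hsdef, ← hθ, hB,
      ← intervalIntegral.integral_const_mul]
    congr 1; ext t; ring
  rw [hJ1, hJ2]
  -- exponent rewriting
  have hE : (k + 2) + (2 * l + 1) * j + 2 * (2 * l + 1) - 1 = (k + 1) + (2 * l + 1) * (j + 2) := by
    rw [show (2 * l + 1) * j = 2 * (l * j) + j from by ring,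
      show (2 * l + 1) * (j + 2) = 2 * (l * j) + j + 4 * l + 2 from by ring]
    generalize l * j = q
    omega
  rw [hE]
  have hsign : ((-1 : ℝ)) ^ ((k + 1) + (2 * l + 1) * (j + 2)) = (-1) ^ (k + 1) * (-1) ^ (j + 2) := by
    rw [show (k + 1) + (2 * l + 1) * (j + 2) = (k + 1) + (j + 2) + 2 * ((j + 2) * l) from by ring,
      pow_add, pow_add, pow_mul]
    norm_num
  rw [hsign]
  have hb : s ^ (k + j + 3) * ((u / s) ^ (k + 1) * (u ^ (2 * l + 1) / s) ^ (j + 2)) =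
      u ^ ((k + 1) + (2 * l + 1) * (j + 2)) := by
    rw [div_pow, div_pow]
    field_simp
    ring
  push_cast
  linear_combination s ^ (k + j + 3) * key2 +
    ((-1 : ℝ) ^ (k + 1) * (-1) ^ (j + 2) - 1) * hb + ((k : ℝ) + 1) * B * s ^ (k + j + 1) * hs2
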